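/- There exist a complex number ξ ∈ ℂ such that 1, ξ and ξ² are linearly independent over ℚ(√−5), and a constant c > 0 such that, for every sufficiently large real number X, there is a nonzero triple (x₀, x₁, x₂) ∈ ℤ[√−5]³ with |x₀| ≤ X and max{|x₀ξ − x₁|, |x₀ξ² − x₂|} ≤ c·X^{−1/γ}. -/

import Mathlib

open Complex IntermediateField

/-- The embedding of `ℤ[√-5]` into `ℂ`, sending `m + n√-5` to `m + n·√5·i`. -/
noncomputable def zsqrtd5ToComplex (z : ℤ√(-5)) : ℂ :=
  (z.re : ℂ) + (z.im : ℂ) * (Real.sqrt 5 * Complex.I)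

namespace Ext5
open Matrix



/-- alternating seed matrices -/
def S (n : ℕ) : Matrix (Fin 2) (Fin 2) ℤ :=
  if n % 2 = 0 then !![3,1;2,1] else !![3,2;1,1]

def P : ℕ → Matrix (Fin 2) (Fin 2) ℤ
  | 0 => 1
  | 1 => !![1,1;1,0]
  | (n+2) => P (n+1) * S (n+1) * P n

lemma S_period (n : ℕ) : S (n + 2) = S n := by
  simp [S, Nat.add_mod_right]

lemma S_transpose (n : ℕ) : (S n)ᵀ = S (n + 1) := by
  rcases Nat.even_or_odd n with h | h
  · have h0 : n % 2 = 0 := Nat.even_iff.mp h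
    have h1 : (n+1) % 2 = 1 := by omega
    simp [S, h0, h1]
    ext i j
    fin_cases i <;> fin_cases j <;> rfl
  · have h0 : n % 2 = 1 := Nat.odd_iff.mp h
    have h1 : (n+1) % 2 = 0 := by omega
    simp [S, h0, h1]
    ext i j
    fin_cases i <;> fin_cases j <;> rfl

lemma P_symm : ∀ n, (P n)ᵀ = P n := by
  intro n
  induction n using Nat.strong_induction_on with
  | _ n ih =>
    match n with
    | 0 => simp [P]
    | 1 => ext i j; fin_cases i <;> fin_cases j <;> rfl
    | 2 =>
      show (P 1 * S 1 * P 0)ᵀ = _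
      simp [P, S]
      ext i j; fin_cases i <;> fin_cases j <;> rfl
    | (m+3) =>
      have h2 : P (m+3) = P (m+2) * S (m+2) * P (m+1) := rfl
      have h1 : P (m+2) = P (m+1) * S (m+1) * P m := rfl
      have ihm : (P m)ᵀ = P m := ih m (by omega)
      have ihm1 : (P (m+1))ᵀ = P (m+1) := ih (m+1) (by omega)
      calc (P (m+3))ᵀ = (P (m+1) * S (m+1) * P m * S (m+2) * P (m+1))ᵀ := by
            rw [h2, h1]
        _ = (P (m+1))ᵀ * (S (m+2))ᵀ * ((P m)ᵀ * (S (m+1))ᵀ * (P (m+1))ᵀ) := by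
            simp [Matrix.transpose_mul, Matrix.mul_assoc]
        _ = P (m+1) * S (m+3) * (P m * S (m+2) * P (m+1)) := by
            rw [ihm, ihm1, S_transpose, S_transpose]
        _ = P (m+3) := by rw [S_period, h2, h1]; simp [Matrix.mul_assoc]

/-- the reversed recurrence -/
lemma P_rec' (n : ℕ) : P (n + 2) = P n * S (n + 2) * P (n + 1) := by
  conv_lhs => rw [← P_symm]
  show (P (n+1) * S (n+1) * P n)ᵀ = _
  rw [Matrix.transpose_mul, Matrix.transpose_mul, P_symm, P_symm, S_transpose,
    Matrix.mul_assoc]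

lemma detS (n : ℕ) : (S n).det = 1 := by
  rcases Nat.even_or_odd n with h | h
  · have h0 : n % 2 = 0 := Nat.even_iff.mp h
    simp [S, h0, Matrix.det_fin_two_of]
  · have h0 : n % 2 = 1 := Nat.odd_iff.mp h
    simp [S, h0, Matrix.det_fin_two_of]

lemma detP_sq : ∀ n, (P n).det * (P n).det = 1 := by
  intro n
  induction n using Nat.strong_induction_on with
  | _ n ih =>
    match n with
    | 0 => simp [P]
    | 1 => simp [P, Matrix.det_fin_two_of]
    | (m+2) =>
      have h : P (m+2) = P (m+1) * S (m+1) * P m := rfl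
      have i1 := ih (m+1) (by omega)
      have i0 := ih m (by omega)
      rw [h, Matrix.det_mul, Matrix.det_mul, detS, mul_one]
      linear_combination ((P m).det * (P m).det) * i1 + i0

/-- Cayley–Hamilton for 2×2 integer matrices. -/
lemma sq_eq (Y : Matrix (Fin 2) (Fin 2) ℤ) :
    Y * Y = Y.trace • Y - Y.det • (1 : Matrix (Fin 2) (Fin 2) ℤ) := by
  ext i j
  simp only [Matrix.sub_apply, Matrix.smul_apply, Matrix.mul_apply, Fin.sum_univ_two,
    Matrix.trace_fin_two, Matrix.det_fin_two, Matrix.one_apply, smul_eq_mul]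
  fin_cases i <;> fin_cases j <;> simp <;> ring

/-- three-step scalar recurrence -/
lemma P_rec3 (n : ℕ) :
    P (n + 3) = (P (n+1) * S (n+1)).trace • P (n + 2) - (P (n+1)).det • P n := by
  have h1 : P (n + 3) = P (n+1) * S (n+3) * P (n+2) := P_rec' (n+1)
  have h2 : P (n + 2) = P (n+1) * S (n+1) * P n := rfl
  have hS : S (n+3) = S (n+1) := S_period (n+1)
  set Y := P (n+1) * S (n+1) with hY
  have hdetY : Y.det = (P (n+1)).det := by
    rw [hY, Matrix.det_mul, detS, mul_one]
  calc P (n+3) = (Y * Y) * P n := by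
        rw [h1, hS, h2]; simp [Matrix.mul_assoc, hY]
    _ = (Y.trace • Y - Y.det • 1) * P n := by rw [sq_eq]
    _ = Y.trace • (Y * P n) - Y.det • P n := by
        rw [Matrix.sub_mul, Matrix.smul_mul, Matrix.smul_mul, Matrix.one_mul]
    _ = _ := by rw [hdetY, ← h2]



def a (n : ℕ) : ℤ := P n 0 0
def b (n : ℕ) : ℤ := P n 0 1
def c (n : ℕ) : ℤ := P n 1 1

lemma P_ba (n : ℕ) : P n 1 0 = b n :=
  (congrFun (congrFun (P_symm n) 1) 0).symm

lemma P2_eq : P 2 = !![4,3;3,2] := by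
  show P 1 * S 1 * P 0 = _
  ext i j
  fin_cases i <;> fin_cases j <;>
    simp [P, S, Matrix.mul_apply, Fin.sum_univ_two, Matrix.one_apply]

lemma P3_eq : P 3 = !![25,18;18,13] := by
  show P 2 * S 2 * P 1 = _
  rw [P2_eq]
  ext i j
  fin_cases i <;> fin_cases j <;>
    simp [P, S, Matrix.mul_apply, Fin.sum_univ_two]

lemma entry_expand (n : ℕ) (i j : Fin 2) :
    P (n+2) i j
      = P (n+1) i 0 * (S (n+1) 0 0 * P n 0 j + S (n+1) 0 1 * P n 1 j)
      + P (n+1) i 1 * (S (n+1) 1 0 * P n 0 j + S (n+1) 1 1 * P n 1 j) := by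
  show (P (n+1) * S (n+1) * P n) i j = _
  simp [Matrix.mul_apply, Fin.sum_univ_two]; ring

lemma S_even {n : ℕ} (h : n % 2 = 0) : S n = !![3,1;2,1] := by simp [S, h]
lemma S_odd {n : ℕ} (h : n % 2 = 1) : S n = !![3,2;1,1] := by simp [S, h]

/-- ordering invariant -/
def Ord (n : ℕ) : Prop :=
  1 ≤ c n ∧ c n ≤ b n ∧ b n ≤ a n ∧ a n ≤ 2 * b n ∧ b n ≤ 2 * c n

lemma abc_expand (n : ℕ) :
    (a (n+2) = a (n+1) * (S (n+1) 0 0 * a n + S (n+1) 0 1 * b n)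
        + b (n+1) * (S (n+1) 1 0 * a n + S (n+1) 1 1 * b n))
    ∧ (b (n+2) = a (n+1) * (S (n+1) 0 0 * b n + S (n+1) 0 1 * c n)
        + b (n+1) * (S (n+1) 1 0 * b n + S (n+1) 1 1 * c n))
    ∧ (c (n+2) = b (n+1) * (S (n+1) 0 0 * b n + S (n+1) 0 1 * c n)
        + c (n+1) * (S (n+1) 1 0 * b n + S (n+1) 1 1 * c n)) := by
  refine ⟨?_, ?_, ?_⟩
  · have h := entry_expand n 0 0
    simp only [P_ba] at h
    exact h
  · have h := entry_expand n 0 1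
    exact h
  · have h := entry_expand n 1 1
    simp only [P_ba] at h
    exact h

lemma ord : ∀ n, Ord (n + 2) := by
  intro n
  induction n using Nat.strong_induction_on with
  | _ n ih =>
    match n with
    | 0 =>
      show Ord 2
      refine ⟨?_, ?_, ?_, ?_, ?_⟩ <;> simp only [a, b, c, P2_eq] <;> norm_num
    | 1 =>
      show Ord 3
      refine ⟨?_, ?_, ?_, ?_, ?_⟩ <;> simp only [a, b, c, P3_eq] <;> norm_num
    | (m+2) =>
      obtain ⟨h1c, h1cb, h1ba, h1ab, h1bc⟩ := ih (m+1) (by omega)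
      rw [show m+1+2 = m+2+1 from by omega] at h1c h1cb h1ba h1ab h1bc
      obtain ⟨h0c, h0cb, h0ba, h0ab, h0bc⟩ := ih m (by omega)
      obtain ⟨ea, eb, ec⟩ := abc_expand (m+2)
      rcases Nat.even_or_odd (m+3) with hp | hp
      · have hS := S_even (Nat.even_iff.mp hp)
        rw [hS] at ea eb ec
        norm_num at ea eb ec
        refine ⟨?_, ?_, ?_, ?_, ?_⟩ <;> simp only [ea, eb, ec] <;> nlinarith
      · have hS := S_odd (Nat.odd_iff.mp hp)
        rw [hS] at ea eb ec
        norm_num at ea eb ec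
        refine ⟨?_, ?_, ?_, ?_, ?_⟩ <;> simp only [ea, eb, ec] <;> nlinarith


lemma b_expand (n : ℕ) :
    b (n+2) = b (n+1) * (S (n+1) 0 0 * a n + S (n+1) 0 1 * b n)
        + c (n+1) * (S (n+1) 1 0 * a n + S (n+1) 1 1 * b n) := by
  have h := entry_expand n 1 0
  simp only [P_ba] at h
  exact h

lemma a0_eq : a 0 = 1 := by simp [a, P, Matrix.one_apply]
lemma b0_eq : b 0 = 0 := by simp [b, P, Matrix.one_apply]
lemma c0_eq : c 0 = 1 := by simp [c, P, Matrix.one_apply]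
lemma a1_eq : a 1 = 1 := rfl
lemma b1_eq : b 1 = 1 := rfl
lemma c1_eq : c 1 = 0 := rfl
lemma a2_eq : a 2 = 4 := by simp [a, P2_eq]
lemma b2_eq : b 2 = 3 := by simp [b, P2_eq]
lemma c2_eq : c 2 = 2 := by simp [c, P2_eq]

lemma a_pos : ∀ n, 1 ≤ a n
  | 0 => le_of_eq a0_eq.symm
  | 1 => le_of_eq a1_eq.symm
  | (n+2) => by have h := ord n; exact le_trans (le_trans h.1 h.2.1) h.2.2.1

lemma b_nonneg : ∀ n, 0 ≤ b n
  | 0 => le_of_eq b0_eq.symm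
  | 1 => by rw [b1_eq]; norm_num
  | (n+2) => by have h := ord n; linarith [h.1, h.2.1]

lemma c_nonneg : ∀ n, 0 ≤ c n
  | 0 => by rw [c0_eq]; norm_num
  | 1 => le_of_eq c1_eq.symm
  | (n+2) => by have h := ord n; linarith [h.1]

lemma bc_pos : ∀ n, 1 ≤ b n + c n
  | 0 => by rw [b0_eq, c0_eq]; norm_num
  | 1 => by rw [b1_eq, c1_eq]; norm_num
  | (n+2) => by have h := ord n; linarith [h.1, h.2.1]

lemma b_pos : ∀ n, 1 ≤ b (n + 1)
  | 0 => le_of_eq b1_eq.symm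
  | (n+1) => by have h := ord n; linarith [h.1, h.2.1]

lemma ab2 : ∀ n, a (n+1) ≤ 2 * b (n+1)
  | 0 => by rw [a1_eq, b1_eq]; norm_num
  | (n+1) => (ord n).2.2.2.1

lemma det_abc (n : ℕ) : a n * c n - b n * b n = (P n).det := by
  rw [Matrix.det_fin_two, P_ba]
  show _ = a n * c n - b n * b n
  ring

lemma det_abc_sq (n : ℕ) : (a n * c n - b n * b n) * (a n * c n - b n * b n) = 1 := by
  rw [det_abc]; exact detP_sq n

/-- growth sandwich -/
lemma a_sandwich : ∀ n, 3 * (a (n+1) * a n) ≤ a (n+2) ∧ a (n+2) ≤ 7 * (a (n+1) * a n) := by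
  intro n
  have hb0 := b_nonneg n
  have hb1 := b_nonneg (n+1)
  have ha0 := a_pos n
  have ha1 := a_pos (n+1)
  have hba1 : b (n+1) ≤ a (n+1) := by
    cases n with
    | zero => rw [a1_eq, b1_eq]
    | succ m => exact (ord m).2.2.1
  have hba0 : b n ≤ a n := by
    cases n with
    | zero => rw [a0_eq, b0_eq]; norm_num
    | succ m =>
      cases m with
      | zero => rw [a1_eq, b1_eq]
      | succ k => exact (ord k).2.2.1
  have ea := (abc_expand n).1
  rcases Nat.even_or_odd (n+1) with hp | hp
  · rw [S_even (Nat.even_iff.mp hp)] at ea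
    norm_num at ea
    constructor <;> rw [ea] <;> nlinarith
  · rw [S_odd (Nat.odd_iff.mp hp)] at ea
    norm_num at ea
    constructor <;> rw [ea] <;> nlinarith

lemma a_lin_growth : ∀ n : ℕ, (n : ℤ) + 2 ≤ a (n + 2) := by
  intro n
  induction n with
  | zero => rw [a2_eq]; norm_num
  | succ m ih =>
    have h := (a_sandwich (m+1)).1
    have h1 := a_pos (m+1)
    push_cast
    push_cast at ih
    nlinarith

/-- doubling of `a*b` -/
lemma ab_doubling : ∀ n, 2 ^ (n+2) ≤ a (n+2) * b (n+2) := by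
  intro n
  induction n with
  | zero => rw [a2_eq, b2_eq]; norm_num
  | succ m ih =>
    have h := (a_sandwich (m+1)).1
    rw [show m+1+1 = m+2 from rfl, show m+1+2 = m+3 from rfl] at h
    have h2 := ab2 (m+2)
    rw [show m+2+1 = m+3 from rfl] at h2
    have hble : b (m+2) ≤ a (m+2) := (ord m).2.2.1
    have ha1 := a_pos (m+1)
    have ha2 := a_pos (m+2)
    have hb3 := b_pos (m+2)
    rw [show m+2+1 = m+3 from rfl] at hb3
    have ha3 := a_pos (m+3)
    have hp : (0:ℤ) ≤ 2 ^ (m+2) := by positivity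
    have h3 : 3 * a (m+2) ≤ a (m+3) := by nlinarith
    have h4 : a (m+3) * a (m+3) ≤ 2 * (a (m+3) * b (m+3)) := by nlinarith
    have h5 : 9 * (a (m+2) * a (m+2)) ≤ a (m+3) * a (m+3) := by nlinarith
    have key : 2 * (a (m+2) * b (m+2)) ≤ a (m+3) * b (m+3) := by nlinarith
    calc (2:ℤ) ^ (m+3) = 2 * 2 ^ (m+2) := by ring
      _ ≤ 2 * (a (m+2) * b (m+2)) := by linarith
      _ ≤ a (m+3) * b (m+3) := key

/-- the 3×3 determinant of consecutive triples -/
def Dt (n : ℕ) : ℤ :=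
  a n * (b (n+1) * c (n+2) - c (n+1) * b (n+2))
  - b n * (a (n+1) * c (n+2) - c (n+1) * a (n+2))
  + c n * (a (n+1) * b (n+2) - b (n+1) * a (n+2))

lemma Dt0_eq : Dt 0 = 1 := by
  rw [Dt, a0_eq, b0_eq, c0_eq, a1_eq, b1_eq, c1_eq, a2_eq, b2_eq, c2_eq]; ring

lemma Dt_rec (n : ℕ) : Dt (n+1) = -(P (n+1)).det * Dt n := by
  have key : ∀ i j, P (n+3) i j
      = (P (n+1) * S (n+1)).trace * P (n+2) i j - (P (n+1)).det * P n i j := by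
    intro i j
    have h := congrFun (congrFun (P_rec3 n) i) j
    simp only [Matrix.sub_apply, Matrix.smul_apply, smul_eq_mul] at h
    exact h
  have ha : a (n+3) = (P (n+1) * S (n+1)).trace * a (n+2) - (P (n+1)).det * a n := key 0 0
  have hb : b (n+3) = (P (n+1) * S (n+1)).trace * b (n+2) - (P (n+1)).det * b n := key 0 1
  have hc : c (n+3) = (P (n+1) * S (n+1)).trace * c (n+2) - (P (n+1)).det * c n := key 1 1
  rw [Dt, Dt, ha, hb, hc]
  ring

lemma Dt_sq : ∀ n, Dt n * Dt n = 1 := by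
  intro n
  induction n with
  | zero => rw [Dt0_eq]; ring
  | succ m ih =>
    rw [Dt_rec m]
    have := detP_sq (m+1)
    nlinarith

/-- Cramer: a vector orthogonal to three consecutive triples is zero -/
lemma cramer (p q r : ℤ) (n : ℕ)
    (E0 : p * a n + q * b n + r * c n = 0)
    (E1 : p * a (n+1) + q * b (n+1) + r * c (n+1) = 0)
    (E2 : p * a (n+2) + q * b (n+2) + r * c (n+2) = 0) :
    p = 0 ∧ q = 0 ∧ r = 0 := by
  have hD := Dt_sq n
  have hp : p * Dt n = 0 := by
    rw [Dt]
    linear_combination (b (n+1) * c (n+2) - c (n+1) * b (n+2)) * E0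
      - (b n * c (n+2) - c n * b (n+2)) * E1 + (b n * c (n+1) - c n * b (n+1)) * E2
  have hq : q * Dt n = 0 := by
    rw [Dt]
    linear_combination (-(a (n+1) * c (n+2) - c (n+1) * a (n+2))) * E0
      + (a n * c (n+2) - c n * a (n+2)) * E1 - (a n * c (n+1) - c n * a (n+1)) * E2
  have hr : r * Dt n = 0 := by
    rw [Dt]
    linear_combination (a (n+1) * b (n+2) - b (n+1) * a (n+2)) * E0
      - (a n * b (n+2) - b n * a (n+2)) * E1 + (a n * b (n+1) - b n * a (n+1)) * E2
  have hDne : Dt n ≠ 0 := by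
    intro h
    rw [h] at hD
    norm_num at hD
  exact ⟨by rcases mul_eq_zero.mp hp with h | h; exact h; exact absurd h hDne,
    by rcases mul_eq_zero.mp hq with h | h; exact h; exact absurd h hDne,
    by rcases mul_eq_zero.mp hr with h | h; exact h; exact absurd h hDne⟩


noncomputable section


def ar (n : ℕ) : ℝ := (a n : ℝ)
def br (n : ℕ) : ℝ := (b n : ℝ)
def cr (n : ℕ) : ℝ := (c n : ℝ)
def sig (n : ℕ) : ℝ := br n / ar n
def tau (n : ℕ) : ℝ := cr n / br n

lemma ar_pos (n : ℕ) : (1:ℝ) ≤ ar n := by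
  have := a_pos n; unfold ar; exact_mod_cast this
lemma br_pos (n : ℕ) : (1:ℝ) ≤ br (n+1) := by
  have := b_pos n; unfold br; exact_mod_cast this
lemma br_nonneg (n : ℕ) : (0:ℝ) ≤ br n := by
  have := b_nonneg n; unfold br; exact_mod_cast this
lemma cr_nonneg (n : ℕ) : (0:ℝ) ≤ cr n := by
  have := c_nonneg n; unfold cr; exact_mod_cast this
lemma ar0 (n : ℕ) : (0:ℝ) < ar n := lt_of_lt_of_le one_pos (ar_pos n)
lemma br0 (n : ℕ) : (0:ℝ) < br (n+1) := lt_of_lt_of_le one_pos (br_pos n)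

lemma mem_uIcc_of_mul_nonpos {x p q : ℝ} (h : (x - p) * (x - q) ≤ 0) :
    x ∈ Set.uIcc p q := by
  rcases le_total p q with hpq | hpq
  · rw [Set.uIcc_of_le hpq, Set.mem_Icc]
    constructor <;> nlinarith
  · rw [Set.uIcc_of_ge hpq, Set.mem_Icc]
    constructor <;> nlinarith

lemma mediant {A B C x y s t : ℝ} (hA : 1 ≤ A) (hB : 1 ≤ B)
    (hd : (A*C - B*B) * (A*C - B*B) = 1) (hs : 0 ≤ s) (ht : 0 ≤ t)
    (hx : x = A*s + B*t) (hy : y = B*s + C*t) (hxpos : 1 ≤ x) :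
    y / x ∈ Set.uIcc (B/A) (C/B) := by
  apply mem_uIcc_of_mul_nonpos
  have hA0 : (0:ℝ) < A := by linarith
  have hB0 : (0:ℝ) < B := by linarith
  have hx0 : (0:ℝ) < x := by linarith
  have e1 : y/x - B/A = t*(A*C - B*B)/(A*x) := by
    rw [hy, hx]
    rw [hx] at hx0
    rw [div_sub_div _ _ (ne_of_gt hx0) (ne_of_gt hA0), mul_comm (A*s+B*t) A]
    congr 1
    ring
  have e2 : y/x - C/B = -(s*(A*C - B*B))/(B*x) := by
    rw [hy, hx]
    rw [hx] at hx0
    rw [div_sub_div _ _ (ne_of_gt hx0) (ne_of_gt hB0), mul_comm (A*s+B*t) B]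
    congr 1
    ring
  rw [e1, e2, div_mul_div_comm]
  have hnum : t * (A*C - B*B) * -(s * (A*C - B*B)) = -(s*t) := by
    linear_combination (-(s*t)) * hd
  rw [hnum]
  apply div_nonpos_of_nonpos_of_nonneg
  · simp [mul_nonneg hs ht]
  · positivity

lemma Svals (n : ℕ) :
    (S n 0 0 = 3 ∧ S n 0 1 = 1 ∧ S n 1 0 = 2 ∧ S n 1 1 = 1)
    ∨ (S n 0 0 = 3 ∧ S n 0 1 = 2 ∧ S n 1 0 = 1 ∧ S n 1 1 = 1) := by
  rcases Nat.even_or_odd n with h | h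
  · left; rw [S_even (Nat.even_iff.mp h)]
    norm_num
  · right; rw [S_odd (Nat.odd_iff.mp h)]
    norm_num

lemma S_entries_nonneg (n : ℕ) (i j : Fin 2) : (0:ℤ) ≤ S n i j := by
  rcases Svals n with ⟨h1,h2,h3,h4⟩ | ⟨h1,h2,h3,h4⟩ <;> fin_cases i <;> fin_cases j <;>
    simp_all <;> norm_num

lemma dr_sq (n : ℕ) : (ar n * cr n - br n * br n) * (ar n * cr n - br n * br n) = 1 := by
  have := det_abc_sq n
  unfold ar br cr
  exact_mod_cast this

lemma nest (n : ℕ) :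
    Set.uIcc (sig (n+2)) (tau (n+2)) ⊆ Set.uIcc (sig (n+1)) (tau (n+1)) := by
  have hs0 : (0:ℤ) ≤ S (n+1) 0 0 * a n + S (n+1) 0 1 * b n :=
    add_nonneg (mul_nonneg (S_entries_nonneg _ 0 0) (le_trans zero_le_one (a_pos n)))
      (mul_nonneg (S_entries_nonneg _ 0 1) (b_nonneg n))
  have ht0 : (0:ℤ) ≤ S (n+1) 1 0 * a n + S (n+1) 1 1 * b n :=
    add_nonneg (mul_nonneg (S_entries_nonneg _ 1 0) (le_trans zero_le_one (a_pos n)))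
      (mul_nonneg (S_entries_nonneg _ 1 1) (b_nonneg n))
  have hs1 : (0:ℤ) ≤ S (n+1) 0 0 * b n + S (n+1) 0 1 * c n :=
    add_nonneg (mul_nonneg (S_entries_nonneg _ 0 0) (b_nonneg n))
      (mul_nonneg (S_entries_nonneg _ 0 1) (c_nonneg n))
  have ht1 : (0:ℤ) ≤ S (n+1) 1 0 * b n + S (n+1) 1 1 * c n :=
    add_nonneg (mul_nonneg (S_entries_nonneg _ 1 0) (b_nonneg n))
      (mul_nonneg (S_entries_nonneg _ 1 1) (c_nonneg n))
  have hm1 : sig (n+2) ∈ Set.uIcc (sig (n+1)) (tau (n+1)) := by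
    unfold sig tau
    apply mediant (A := ar (n+1)) (B := br (n+1)) (C := cr (n+1))
      (s := ((S (n+1) 0 0 * a n + S (n+1) 0 1 * b n : ℤ) : ℝ))
      (t := ((S (n+1) 1 0 * a n + S (n+1) 1 1 * b n : ℤ) : ℝ))
      (ar_pos (n+1)) (br_pos n) (dr_sq (n+1))
      (by exact_mod_cast hs0) (by exact_mod_cast ht0)
    · have h := (abc_expand n).1
      unfold ar br
      exact_mod_cast h
    · have h := b_expand n
      unfold br cr
      exact_mod_cast h
    · exact ar_pos (n+2)
  have hm2 : tau (n+2) ∈ Set.uIcc (sig (n+1)) (tau (n+1)) := by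
    unfold sig tau
    apply mediant (A := ar (n+1)) (B := br (n+1)) (C := cr (n+1))
      (s := ((S (n+1) 0 0 * b n + S (n+1) 0 1 * c n : ℤ) : ℝ))
      (t := ((S (n+1) 1 0 * b n + S (n+1) 1 1 * c n : ℤ) : ℝ))
      (ar_pos (n+1)) (br_pos n) (dr_sq (n+1))
      (by exact_mod_cast hs1) (by exact_mod_cast ht1)
    · have h := (abc_expand n).2.1
      unfold ar br
      exact_mod_cast h
    · have h := (abc_expand n).2.2
      unfold br cr
      exact_mod_cast h
    · exact br_pos (n+1)
  exact Set.uIcc_subset_uIcc hm1 hm2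

lemma nest_chain (n : ℕ) : ∀ k, Set.uIcc (sig (n+1+k)) (tau (n+1+k)) ⊆
    Set.uIcc (sig (n+1)) (tau (n+1)) := by
  intro k
  induction k with
  | zero => exact subset_rfl
  | succ m ih =>
    have h := nest (n + m)
    rw [show n+m+2 = n+1+(m+1) from by omega, show n+m+1 = n+1+m from by omega] at h
    exact h.trans ih

lemma sig_mem (n m : ℕ) (h : n + 1 ≤ m) :
    sig m ∈ Set.uIcc (sig (n+1)) (tau (n+1)) := by
  obtain ⟨k, rfl⟩ := Nat.exists_eq_add_of_le h
  exact nest_chain n k Set.left_mem_uIcc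

lemma abs_sub_le_of_uIcc {p q x y : ℝ} (hx : x ∈ Set.uIcc p q)
    (hy : y ∈ Set.uIcc p q) : |x - y| ≤ |p - q| := by
  rcases le_total p q with h | h
  · rw [Set.uIcc_of_le h, Set.mem_Icc] at hx hy
    rw [abs_sub_le_iff, _root_.abs_of_nonpos (by linarith : p - q ≤ 0)]
    constructor <;> linarith [hx.1, hx.2, hy.1, hy.2]
  · rw [Set.uIcc_of_ge h, Set.mem_Icc] at hx hy
    rw [abs_sub_le_iff, _root_.abs_of_nonneg (by linarith : (0:ℝ) ≤ p - q)]
    constructor <;> linarith [hx.1, hx.2, hy.1, hy.2]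

lemma width (n : ℕ) : |sig (n+1) - tau (n+1)| = 1 / (ar (n+1) * br (n+1)) := by
  have hA := ar0 (n+1)
  have hB := br0 n
  have hd := dr_sq (n+1)
  have he : sig (n+1) - tau (n+1)
      = -((ar (n+1) * cr (n+1) - br (n+1) * br (n+1))) / (ar (n+1) * br (n+1)) := by
    unfold sig tau
    field_simp
    try ring
  have h1 : |ar (n+1) * cr (n+1) - br (n+1) * br (n+1)| = 1 := by
    rcases mul_self_eq_one_iff.mp hd with h | h <;> rw [h] <;> norm_num
  have h2 : |ar (n+1) * br (n+1)| = ar (n+1) * br (n+1) :=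
    _root_.abs_of_pos (mul_pos (ar0 (n+1)) (br0 n))
  rw [he, abs_div, abs_neg, h1, h2]

lemma ab_ge_pow (n : ℕ) : (2:ℝ) ^ (n+2) ≤ ar (n+2) * br (n+2) := by
  have := ab_doubling n
  unfold ar br
  exact_mod_cast this

lemma cauchy : CauchySeq sig := by
  apply cauchySeq_of_le_geometric (1/2 : ℝ) 4 (by norm_num)
  intro n
  rcases n with - | n
  · rw [Real.dist_eq, abs_sub_le_iff]
    unfold sig br ar
    rw [b0_eq, a0_eq, b1_eq, a1_eq]
    constructor <;> norm_num
  rcases n with - | n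
  · rw [Real.dist_eq, abs_sub_le_iff]
    unfold sig br ar
    rw [b1_eq, a1_eq, b2_eq, a2_eq]
    constructor <;> norm_num
  · -- n+2 case
    have h1 : sig (n+2) ∈ Set.uIcc (sig (n+2)) (tau (n+2)) := Set.left_mem_uIcc
    have h2 : sig (n+3) ∈ Set.uIcc (sig (n+2)) (tau (n+2)) :=
      sig_mem (n+1) (n+3) (by omega)
    have h3 := abs_sub_le_of_uIcc h1 h2
    rw [Real.dist_eq]
    refine le_trans h3 ?_
    rw [width (n+1)]
    have h4 := ab_ge_pow n
    have h5 : (0:ℝ) < ar (n+2) * br (n+2) := mul_pos (ar0 (n+2)) (br0 (n+1))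
    rw [div_le_iff₀ h5]
    have h6 : (0:ℝ) < (2:ℝ)^(n+2) := by positivity
    have key : (2:ℝ) ^ (n+2) * (1/2)^(n+2) = 1 := by
      rw [← mul_pow]
      norm_num
    calc (1:ℝ) = 2^(n+2) * (1/2)^(n+2) := key.symm
      _ ≤ 4 * (1/2)^(n+2) * (ar (n+2) * br (n+2)) := by
          have hh : (0:ℝ) < (1/2:ℝ)^(n+2) := by positivity
          nlinarith
      _ = 4 * (1 / 2) ^ (n + 2) * (ar (n+2) * br (n+2)) := by ring

lemma exists_xi : ∃ ξ : ℝ, 0 ≤ ξ ∧ ξ ≤ 1 ∧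
    (∀ n, ξ ∈ Set.uIcc (sig (n+1)) (tau (n+1))) := by
  obtain ⟨ξ, hlim⟩ := cauchySeq_tendsto_of_complete cauchy
  have hmem : ∀ n, ξ ∈ Set.uIcc (sig (n+1)) (tau (n+1)) := by
    intro n
    have hcl : IsClosed (Set.uIcc (sig (n+1)) (tau (n+1))) := by
      rw [Set.uIcc_eq_union]
      exact (isClosed_Icc.union isClosed_Icc)
    apply hcl.mem_of_tendsto hlim
    filter_upwards [Filter.eventually_ge_atTop (n+1)] with m hm
    exact sig_mem n m hm
  have h1 := hmem 0
  have hs1 : sig 1 = 1 := by unfold sig br ar; rw [b1_eq, a1_eq]; norm_num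
  have ht1 : tau 1 = 0 := by unfold tau br cr; rw [b1_eq, c1_eq]; norm_num
  rw [hs1, ht1] at h1
  rcases Set.mem_uIcc.mp h1 with ⟨hl, hr⟩ | ⟨hl, hr⟩
  · exact ⟨ξ, by linarith, by linarith, hmem⟩
  · exact ⟨ξ, by linarith, by linarith, hmem⟩

open Real in
lemma growth (n : ℕ) : ar (n+1) ≤ Real.exp 16 * ar n ^ (goldenRatio : ℝ) := by
  classical
  set u : ℕ → ℝ := fun k => Real.log (ar k) with hu
  have hA0 : ∀ k, (0:ℝ) < ar k := ar0
  have hrec : ∀ k, u (k+1) + u k ≤ u (k+2) ∧ u (k+2) ≤ u (k+1) + u k + 6 := by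
    intro k
    have hs := a_sandwich k
    have h3 : 3 * (ar (k+1) * ar k) ≤ ar (k+2) := by
      have := hs.1; unfold ar; exact_mod_cast this
    have h7 : ar (k+2) ≤ 7 * (ar (k+1) * ar k) := by
      have := hs.2; unfold ar; exact_mod_cast this
    have hm : (0:ℝ) < ar (k+1) * ar k := mul_pos (hA0 _) (hA0 _)
    constructor
    · have : ar (k+1) * ar k ≤ ar (k+2) := by nlinarith
      calc u (k+1) + u k = Real.log (ar (k+1) * ar k) := by
            rw [Real.log_mul (ne_of_gt (hA0 _)) (ne_of_gt (hA0 _))]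
        _ ≤ u (k+2) := Real.log_le_log (by positivity) this
    · have h7' : ar (k+2) ≤ 7 * (ar (k+1) * ar k) := h7
      have hlog7 : Real.log 7 ≤ 6 := by
        have := Real.log_le_sub_one_of_pos (show (0:ℝ) < 7 by norm_num)
        linarith
      calc u (k+2) ≤ Real.log (7 * (ar (k+1) * ar k)) :=
            Real.log_le_log (hA0 _) h7'
        _ = Real.log 7 + (u (k+1) + u k) := by
            rw [Real.log_mul (by norm_num) (ne_of_gt hm),
              Real.log_mul (ne_of_gt (hA0 _)) (ne_of_gt (hA0 _))]
        _ ≤ u (k+1) + u k + 6 := by linarith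
  have hphi1 : (1:ℝ) < goldenRatio := one_lt_goldenRatio
  have hphi2 : goldenRatio ≤ 1.625 := by
    have h5 : Real.sqrt 5 ≤ 2.25 := by
      nlinarith [Real.sq_sqrt (show (0:ℝ) ≤ 5 by norm_num), Real.sqrt_nonneg 5]
    rw [goldenRatio]
    nlinarith
  have hsq : goldenRatio ^ 2 = goldenRatio + 1 := goldenRatio_sq
  have hw : ∀ k, |u (k+1) - goldenRatio * u k| ≤ 16 := by
    intro k
    induction k with
    | zero =>
      have h0 : ar 0 = 1 := by unfold ar; rw [a0_eq]; norm_num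
      have h1 : ar 1 = 1 := by unfold ar; rw [a1_eq]; norm_num
      simp [hu, h0, h1]
    | succ m ih =>
      have hid : u (m+2) - goldenRatio * u (m+1)
          = (1 - goldenRatio) * (u (m+1) - goldenRatio * u m)
            + (u (m+2) - u (m+1) - u m) := by
        have h5 : Real.sqrt 5 ^ 2 = 5 := Real.sq_sqrt (by norm_num)
        linear_combination (u m) * hsq + (-(u m)/2) * h5
      have hΔ0 : 0 ≤ u (m+2) - u (m+1) - u m := by linarith [(hrec m).1]
      have hΔ6 : u (m+2) - u (m+1) - u m ≤ 6 := by linarith [(hrec m).2]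
      rw [hid]
      have habs : |(1 - goldenRatio) * (u (m+1) - goldenRatio * u m)|
          ≤ (goldenRatio - 1) * 16 := by
        rw [abs_mul, _root_.abs_of_nonpos (by linarith : 1 - goldenRatio ≤ 0)]
        have := abs_nonneg (u (m+1) - goldenRatio * u m)
        nlinarith
      calc |(1 - goldenRatio) * (u (m+1) - goldenRatio * u m)
            + (u (m+2) - u (m+1) - u m)|
          ≤ |(1 - goldenRatio) * (u (m+1) - goldenRatio * u m)|
            + |u (m+2) - u (m+1) - u m| := abs_add_le _ _
        _ ≤ (goldenRatio - 1) * 16 + 6 := by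
            have : |u (m+2) - u (m+1) - u m| ≤ 6 := by
              rw [_root_.abs_of_nonneg hΔ0]; exact hΔ6
            linarith
        _ ≤ 16 := by nlinarith
  have hkey : u (n+1) ≤ goldenRatio * u n + 16 := by
    have := hw n
    have := abs_le.mp this
    linarith [this.2]
  have hexp : ar (n+1) = Real.exp (u (n+1)) := (Real.exp_log (hA0 _)).symm
  have hexp2 : ar n ^ (goldenRatio : ℝ) = Real.exp (u n * goldenRatio) := by
    rw [Real.rpow_def_of_pos (hA0 n)]
  rw [hexp, hexp2, ← Real.exp_add]
  apply Real.exp_le_exp.mpr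
  linarith

open Real in
lemma invgrowth (n : ℕ) : ar (n+1) ^ ((1:ℝ)/goldenRatio) ≤ Real.exp 16 * ar n := by
  have h := growth n
  have hA1 : (0:ℝ) ≤ ar (n+1) := le_of_lt (ar0 _)
  have hAn : (0:ℝ) < ar n := ar0 _
  have hφ : (0:ℝ) < goldenRatio := goldenRatio_pos
  have h1 : ar (n+1) ^ ((1:ℝ)/goldenRatio)
      ≤ (Real.exp 16 * ar n ^ (goldenRatio:ℝ)) ^ ((1:ℝ)/goldenRatio) :=
    Real.rpow_le_rpow hA1 h (by positivity)
  have h2 : (Real.exp 16 * ar n ^ (goldenRatio:ℝ)) ^ ((1:ℝ)/goldenRatio)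
      = (Real.exp 16) ^ ((1:ℝ)/goldenRatio) * ar n := by
    rw [Real.mul_rpow (le_of_lt (Real.exp_pos 16)) (by positivity),
      ← Real.rpow_mul (le_of_lt hAn), mul_one_div, div_self (ne_of_gt hφ),
      Real.rpow_one]
  have h3 : (Real.exp 16) ^ ((1:ℝ)/goldenRatio) ≤ Real.exp 16 := by
    have := Real.rpow_le_rpow_of_exponent_le (Real.one_le_exp (by norm_num : (0:ℝ) ≤ 16))
      (show (1:ℝ)/goldenRatio ≤ 1 by
        rw [div_le_one hφ]; exact le_of_lt one_lt_goldenRatio)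
    simpa using this
  calc ar (n+1) ^ ((1:ℝ)/goldenRatio)
      ≤ (Real.exp 16) ^ ((1:ℝ)/goldenRatio) * ar n := le_of_le_of_eq h1 h2
    _ ≤ Real.exp 16 * ar n := by nlinarith


lemma ar2_eq : ar 2 = 4 := by unfold ar; rw [a2_eq]; norm_num

lemma ar_ge (k : ℕ) : (k : ℝ) + 2 ≤ ar (k+2) := by
  have h := a_lin_growth k
  have : ((k:ℤ) : ℝ) + 2 ≤ ar (k+2) := by unfold ar; exact_mod_cast h
  push_cast at this
  linarith

lemma err_main (ξ : ℝ) (hξ0 : 0 ≤ ξ) (hξ1 : ξ ≤ 1)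
    (hmem : ∀ n, ξ ∈ Set.uIcc (sig (n+1)) (tau (n+1))) (n : ℕ) :
    |ar (n+1) * ξ - br (n+1)| ≤ 2 / ar (n+1) ∧
    |ar (n+1) * ξ^2 - cr (n+1)| ≤ 3 / ar (n+1) := by
  have hA := ar0 (n+1)
  have hB := br0 n
  have hw := width n
  have h1 : |ξ - sig (n+1)| ≤ 1/(ar (n+1) * br (n+1)) := by
    rw [← hw]; exact abs_sub_le_of_uIcc (hmem n) Set.left_mem_uIcc
  have h2 : |ξ - tau (n+1)| ≤ 1/(ar (n+1) * br (n+1)) := by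
    rw [← hw]; exact abs_sub_le_of_uIcc (hmem n) Set.right_mem_uIcc
  have e1 : ar (n+1) * ξ - br (n+1) = ar (n+1) * (ξ - sig (n+1)) := by
    unfold sig; field_simp
  have e2 : br (n+1) * ξ - cr (n+1) = br (n+1) * (ξ - tau (n+1)) := by
    unfold tau; field_simp
  have hb1 : |ar (n+1) * ξ - br (n+1)| ≤ 1 / br (n+1) := by
    rw [e1, abs_mul, _root_.abs_of_pos hA]
    calc ar (n+1) * |ξ - sig (n+1)| ≤ ar (n+1) * (1/(ar (n+1) * br (n+1))) :=
          mul_le_mul_of_nonneg_left h1 (le_of_lt hA)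
      _ = 1 / br (n+1) := by field_simp
  have hb2 : |br (n+1) * ξ - cr (n+1)| ≤ 1 / ar (n+1) := by
    rw [e2, abs_mul, _root_.abs_of_pos hB]
    calc br (n+1) * |ξ - tau (n+1)| ≤ br (n+1) * (1/(ar (n+1) * br (n+1))) :=
          mul_le_mul_of_nonneg_left h2 (le_of_lt hB)
      _ = 1 / ar (n+1) := by field_simp
  have hab : ar (n+1) ≤ 2 * br (n+1) := by
    have := ab2 n; unfold ar br; exact_mod_cast this
  have hfirst : |ar (n+1) * ξ - br (n+1)| ≤ 2 / ar (n+1) := by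
    refine hb1.trans ?_
    rw [div_le_div_iff₀ hB hA]
    linarith
  refine ⟨hfirst, ?_⟩
  have e3 : ar (n+1) * ξ^2 - cr (n+1)
      = ξ * (ar (n+1) * ξ - br (n+1)) + (br (n+1) * ξ - cr (n+1)) := by ring
  have habs : |ξ| ≤ 1 := by rw [_root_.abs_of_nonneg hξ0]; exact hξ1
  calc |ar (n+1) * ξ^2 - cr (n+1)|
      ≤ |ξ * (ar (n+1) * ξ - br (n+1))| + |br (n+1) * ξ - cr (n+1)| := by
        rw [e3]; exact abs_add_le _ _
    _ ≤ 2 / ar (n+1) + 1 / ar (n+1) := by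
        rw [abs_mul]
        have h4 : |ξ| * |ar (n+1) * ξ - br (n+1)| ≤ 2 / ar (n+1) := by
          have hnn := abs_nonneg (ar (n+1) * ξ - br (n+1))
          nlinarith
        linarith
    _ = 3 / ar (n+1) := by ring

lemma pick (X : ℝ) (hX : 4 ≤ X) : ∃ n : ℕ, ar (n+2) ≤ X ∧ X < ar (n+3) := by
  have hex : ∃ m : ℕ, X < ar (m+2) := by
    refine ⟨Nat.ceil X + 1, ?_⟩
    have h1 : X ≤ (Nat.ceil X : ℝ) := Nat.le_ceil X
    have h2 := ar_ge (Nat.ceil X + 1)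
    push_cast at h2
    linarith
  classical
  have hspec : X < ar (Nat.find hex + 2) := Nat.find_spec hex
  have h0 : Nat.find hex ≠ 0 := by
    intro h
    rw [h] at hspec
    rw [show (0+2 : ℕ) = 2 from rfl, ar2_eq] at hspec
    linarith
  obtain ⟨n, hkn⟩ : ∃ n, Nat.find hex = n + 1 := ⟨Nat.find hex - 1, by omega⟩
  rw [hkn] at hspec
  refine ⟨n, ?_, hspec⟩
  have hmin := Nat.find_min hex (m := n) (by omega)
  linarith [not_lt.mp hmin]

open Real in
/-- The final approximation estimate. -/
lemma final_approx (ξ : ℝ) (hξ0 : 0 ≤ ξ) (hξ1 : ξ ≤ 1)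
    (hmem : ∀ n, ξ ∈ Set.uIcc (sig (n+1)) (tau (n+1)))
    (X : ℝ) (hX : 4 ≤ X) :
    ∃ n : ℕ, ar (n+2) ≤ X ∧
      |ar (n+2) * ξ - br (n+2)| ≤ (3 * Real.exp 16) * X ^ (-(1/goldenRatio)) ∧
      |ar (n+2) * ξ^2 - cr (n+2)| ≤ (3 * Real.exp 16) * X ^ (-(1/goldenRatio)) := by
  obtain ⟨n, hle, hlt⟩ := pick X hX
  have hXpos : (0:ℝ) < X := by linarith
  have herr := err_main ξ hξ0 hξ1 hmem (n+1)
  rw [show n+1+1 = n+2 from rfl] at herr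
  have hub : 3 / ar (n+2) ≤ (3 * Real.exp 16) * X ^ (-(1/goldenRatio)) := by
    have hig := invgrowth (n+2)
    have hXr : X ^ ((1:ℝ)/goldenRatio) ≤ ar (n+3) ^ ((1:ℝ)/goldenRatio) :=
      Real.rpow_le_rpow (le_of_lt hXpos) (le_of_lt hlt) (by positivity)
    have hXrpos : (0:ℝ) < X ^ ((1:ℝ)/goldenRatio) :=
      Real.rpow_pos_of_pos hXpos _
    have hA2 : (0:ℝ) < ar (n+2) := ar0 _
    have hchain : X ^ ((1:ℝ)/goldenRatio) ≤ Real.exp 16 * ar (n+2) :=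
      le_trans hXr hig
    rw [Real.rpow_neg (le_of_lt hXpos)]
    calc 3 / ar (n+2) = 3 * Real.exp 16 * (Real.exp 16 * ar (n+2))⁻¹ := by
          rw [mul_inv]
          field_simp
        _ ≤ 3 * Real.exp 16 * (X ^ ((1:ℝ)/goldenRatio))⁻¹ := by
          apply mul_le_mul_of_nonneg_left _ (by positivity)
          exact inv_anti₀ hXrpos hchain
  refine ⟨n, hle, le_trans (le_trans herr.1 ?_) hub, le_trans herr.2 hub⟩
  have hA2 : (0:ℝ) < ar (n+2) := ar0 _
  rw [div_le_div_iff₀ hA2 hA2]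
  nlinarith [hA2]


lemma intIndep (ξ : ℝ) (hξ0 : 0 ≤ ξ) (hξ1 : ξ ≤ 1)
    (hmem : ∀ n, ξ ∈ Set.uIcc (sig (n+1)) (tau (n+1)))
    (p q r : ℤ) (h : (p:ℝ) + q*ξ + r*ξ^2 = 0) : p = 0 ∧ q = 0 ∧ r = 0 := by
  set M : ℤ := 2*|q| + 3*|r| with hM
  have hM0 : 0 ≤ M := by positivity
  set N : ℕ := M.toNat + 2 with hN
  have hL : ∀ k : ℕ, N ≤ k → p * a k + q * b k + r * c k = 0 := by
    intro k hk
    obtain ⟨m, rfl⟩ : ∃ m, k = m + 2 := ⟨k - 2, by omega⟩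
    have herr := err_main ξ hξ0 hξ1 hmem (m+1)
    rw [show m+1+1 = m+2 from rfl] at herr
    have hA2 : (0:ℝ) < ar (m+2) := ar0 _
    have hident : ((p * a (m+2) + q * b (m+2) + r * c (m+2) : ℤ) : ℝ)
        = -(q:ℝ)*(ar (m+2) * ξ - br (m+2)) - (r:ℝ)*(ar (m+2) * ξ^2 - cr (m+2)) := by
      unfold ar br cr
      push_cast
      linear_combination ((a (m+2) : ℝ)) * h
    have hbound : |((p * a (m+2) + q * b (m+2) + r * c (m+2) : ℤ) : ℝ)|
        ≤ ((M:ℝ)) / ar (m+2) := by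
      rw [hident]
      have h1 := herr.1
      have h2 := herr.2
      have e1 := abs_nonneg (ar (m+2) * ξ - br (m+2))
      have e2 := abs_nonneg (ar (m+2) * ξ^2 - cr (m+2))
      calc |-(q:ℝ)*(ar (m+2) * ξ - br (m+2)) - (r:ℝ)*(ar (m+2) * ξ^2 - cr (m+2))|
          ≤ |(q:ℝ)| * |ar (m+2) * ξ - br (m+2)| + |(r:ℝ)| * |ar (m+2) * ξ^2 - cr (m+2)| := by
            have := abs_sub (-(q:ℝ)*(ar (m+2) * ξ - br (m+2)))
              ((r:ℝ)*(ar (m+2) * ξ^2 - cr (m+2)))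
            rw [abs_mul, abs_mul, abs_neg] at this
            exact this
        _ ≤ |(q:ℝ)| * (2 / ar (m+2)) + |(r:ℝ)| * (3 / ar (m+2)) := by
            have hq0 := abs_nonneg (q:ℝ)
            have hr0 := abs_nonneg (r:ℝ)
            have := mul_le_mul_of_nonneg_left h1 hq0
            have := mul_le_mul_of_nonneg_left h2 hr0
            linarith
        _ = (2*|(q:ℝ)| + 3*|(r:ℝ)|) / ar (m+2) := by ring
        _ = ((M:ℝ)) / ar (m+2) := by
            rw [hM]
            push_cast
            ring
    have hMlt : (M:ℝ) < ar (m+2) := by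
      have hge := ar_ge m
      have ht : M.toNat ≤ m := by omega
      have h' : (M.toNat : ℝ) ≤ (m:ℝ) := by exact_mod_cast ht
      have hMr : (M:ℝ) = ((M.toNat : ℤ) : ℝ) := by rw [Int.toNat_of_nonneg hM0]
      push_cast at hMr
      linarith
    have hlt1 : |((p * a (m+2) + q * b (m+2) + r * c (m+2) : ℤ) : ℝ)| < 1 := by
      have hA2' : (0:ℝ) < ar (m+2) := ar0 _
      have : ((M:ℝ)) / ar (m+2) < 1 := by
        rw [div_lt_one hA2']
        exact hMlt
      linarith
    have habs : |p * a (m+2) + q * b (m+2) + r * c (m+2)| < 1 := by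
      exact_mod_cast hlt1
    exact Int.abs_lt_one_iff.mp habs
  exact cramer p q r N (hL N le_rfl) (hL (N+1) (by omega)) (hL (N+2) (by omega))

lemma ratIndep (ξ : ℝ) (hξ0 : 0 ≤ ξ) (hξ1 : ξ ≤ 1)
    (hmem : ∀ n, ξ ∈ Set.uIcc (sig (n+1)) (tau (n+1)))
    (p q r : ℚ) (h : (p:ℝ) + q*ξ + r*ξ^2 = 0) : p = 0 ∧ q = 0 ∧ r = 0 := by
  set zp : ℤ := p.num * q.den * r.den with hzp
  set zq : ℤ := q.num * p.den * r.den with hzq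
  set zr : ℤ := r.num * p.den * q.den with hzr
  have hd : (0:ℝ) < (p.den : ℝ) * q.den * r.den := by positivity
  have key : (zp:ℝ) + zq*ξ + zr*ξ^2 = 0 := by
    have hp' : ((p.num : ℝ)) = (p:ℝ) * p.den := by
      have h0 : (p:ℝ) = (p.num:ℝ)/(p.den:ℝ) := Rat.cast_def _
      rw [h0]
      field_simp
    have hq' : ((q.num : ℝ)) = (q:ℝ) * q.den := by
      have h0 : (q:ℝ) = (q.num:ℝ)/(q.den:ℝ) := Rat.cast_def _
      rw [h0]
      field_simp
    have hr' : ((r.num : ℝ)) = (r:ℝ) * r.den := by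
      have h0 : (r:ℝ) = (r.num:ℝ)/(r.den:ℝ) := Rat.cast_def _
      rw [h0]
      field_simp
    have : (zp:ℝ) + zq*ξ + zr*ξ^2
        = ((p.den : ℝ) * q.den * r.den) * ((p:ℝ) + q*ξ + r*ξ^2) := by
      rw [hzp, hzq, hzr]
      push_cast
      rw [hp', hq', hr']
      ring
    rw [this, h, mul_zero]
  obtain ⟨h1, h2, h3⟩ := intIndep ξ hξ0 hξ1 hmem zp zq zr key
  have hpd : ((p.den:ℤ)) ≠ 0 := Int.natCast_ne_zero.mpr p.den_nz
  have hqd : ((q.den:ℤ)) ≠ 0 := Int.natCast_ne_zero.mpr q.den_nz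
  have hrd : ((r.den:ℤ)) ≠ 0 := Int.natCast_ne_zero.mpr r.den_nz
  refine ⟨?_, ?_, ?_⟩
  · have hnum : p.num = 0 := by
      rw [hzp] at h1
      rcases mul_eq_zero.mp h1 with h' | h'
      · rcases mul_eq_zero.mp h' with h'' | h''
        · exact h''
        · exact absurd h'' hqd
      · exact absurd h' hrd
    exact Rat.num_eq_zero.mp hnum
  · have hnum : q.num = 0 := by
      rw [hzq] at h2
      rcases mul_eq_zero.mp h2 with h' | h'
      · rcases mul_eq_zero.mp h' with h'' | h''
        · exact h''
        · exact absurd h'' hpd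
      · exact absurd h' hrd
    exact Rat.num_eq_zero.mp hnum
  · have hnum : r.num = 0 := by
      rw [hzr] at h3
      rcases mul_eq_zero.mp h3 with h' | h'
      · rcases mul_eq_zero.mp h' with h'' | h''
        · exact h''
        · exact absurd h'' hpd
      · exact absurd h' hqd
    exact Rat.num_eq_zero.mp hnum

end

open Real in
lemma master : ∃ ξ : ℝ,
    (∀ p q r : ℚ, (p:ℝ) + q*ξ + r*ξ^2 = 0 → p = 0 ∧ q = 0 ∧ r = 0) ∧
    ∀ X : ℝ, 4 ≤ X → ∃ A B C : ℤ, 1 ≤ A ∧ ((A:ℝ)) ≤ X ∧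
      |(A:ℝ) * ξ - B| ≤ (3*Real.exp 16) * X ^ (-(1/goldenRatio)) ∧
      |(A:ℝ) * ξ^2 - C| ≤ (3*Real.exp 16) * X ^ (-(1/goldenRatio)) := by
  obtain ⟨ξ, h0, h1, hmem⟩ := exists_xi
  refine ⟨ξ, fun p q r h => ratIndep ξ h0 h1 hmem p q r h, ?_⟩
  intro X hX
  obtain ⟨n, hle, hB, hC⟩ := final_approx ξ h0 h1 hmem X hX
  exact ⟨a (n+2), b (n+2), c (n+2), a_pos (n+2), hle, hB, hC⟩

lemma theta_sq : ((Real.sqrt 5 : ℂ) * Complex.I)^2 = (-5 : ℂ) := by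
  have h5 : ((Real.sqrt 5 : ℝ) : ℂ)^2 = (5:ℂ) := by
    rw [← Complex.ofReal_pow, Real.sq_sqrt (by norm_num : (0:ℝ) ≤ 5)]
    norm_num
  calc ((Real.sqrt 5 : ℂ) * Complex.I)^2
      = ((Real.sqrt 5 : ℝ) : ℂ)^2 * Complex.I^2 := by ring
    _ = (5:ℂ) * (-1) := by rw [h5, Complex.I_sq]
    _ = -5 := by ring

lemma theta_integral : IsIntegral ℚ ((Real.sqrt 5 : ℂ) * Complex.I) := by
  refine ⟨Polynomial.X^2 + Polynomial.C 5, ?_, ?_⟩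
  · apply Polynomial.monic_X_pow_add
    simpa using Polynomial.degree_C_le
  · simp [Polynomial.eval₂_add, theta_sq]
    try norm_num

lemma mem_classify' (w : ℂ)
    (hw : w ∈ Algebra.adjoin ℚ {(Real.sqrt 5 : ℂ) * Complex.I}) :
    ∃ p q : ℚ, w = (p : ℂ) + (q : ℂ) * ((Real.sqrt 5 : ℂ) * Complex.I) := by
  induction hw using Algebra.adjoin_induction with
  | mem x hx =>
    rw [Set.mem_singleton_iff] at hx
    exact ⟨0, 1, by rw [hx]; push_cast; ring⟩
  | algebraMap r =>
    exact ⟨r, 0, by rw [eq_ratCast (algebraMap ℚ ℂ) r]; push_cast; ring⟩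
  | add x y hx hy ihx ihy =>
    obtain ⟨p1, q1, e1⟩ := ihx
    obtain ⟨p2, q2, e2⟩ := ihy
    exact ⟨p1 + p2, q1 + q2, by rw [e1, e2]; push_cast; ring⟩
  | mul x y hx hy ihx ihy =>
    obtain ⟨p1, q1, e1⟩ := ihx
    obtain ⟨p2, q2, e2⟩ := ihy
    refine ⟨p1*p2 - 5*(q1*q2), p1*q2 + q1*p2, ?_⟩
    rw [e1, e2]
    push_cast
    linear_combination ((q1:ℂ) * (q2:ℂ)) * theta_sq

lemma mem_classify (z : ℚ⟮(Real.sqrt 5 : ℂ) * Complex.I⟯) :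
    ∃ p q : ℚ, (z : ℂ) = (p : ℂ) + (q : ℂ) * ((Real.sqrt 5 : ℂ) * Complex.I) := by
  apply mem_classify'
  have h := IntermediateField.adjoin_simple_toSubalgebra_of_isAlgebraic theta_integral.isAlgebraic
  have hz0 : (z:ℂ) ∈ (ℚ⟮(Real.sqrt 5 : ℂ) * Complex.I⟯).toSubalgebra := z.2
  rwa [h] at hz0


end Ext5


open Ext5 in
theorem extremal_zsqrtd5 :
    ∃ ξ : ℂ,
      LinearIndependent ℚ⟮((Real.sqrt 5 : ℂ) * Complex.I)⟯ ![(1 : ℂ), ξ, ξ ^ 2] ∧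
      ∃ c : ℝ, 0 < c ∧ ∃ X₀ : ℝ, ∀ X : ℝ, X₀ ≤ X →
        ∃ x : Fin 3 → ℤ√(-5), x ≠ 0 ∧
          ‖zsqrtd5ToComplex (x 0)‖ ≤ X ∧
          max ‖zsqrtd5ToComplex (x 0) * ξ - zsqrtd5ToComplex (x 1)‖
              ‖zsqrtd5ToComplex (x 0) * ξ ^ 2 - zsqrtd5ToComplex (x 2)‖
            ≤ c * X ^ (-1 / Real.goldenRatio) := by
  obtain ⟨ξ, hrat, happrox⟩ := master
  set θ := (Real.sqrt 5 : ℂ) * Complex.I with hθ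
  refine ⟨((ξ : ℝ) : ℂ), ?_, 3*Real.exp 16, by positivity, 4, ?_⟩
  · -- linear independence
    rw [Fintype.linearIndependent_iff]
    intro g hsum
    have hsmul : ∀ (u : ℚ⟮θ⟯) (z : ℂ), u • z = (u : ℂ) * z := fun u z => rfl
    rw [Fin.sum_univ_three] at hsum
    simp only [Matrix.cons_val_zero, Matrix.cons_val_one, Matrix.head_cons,
      Matrix.cons_val_two, Matrix.tail_cons, hsmul] at hsum
    obtain ⟨p0, q0, e0⟩ := mem_classify (g 0)
    obtain ⟨p1, q1, e1⟩ := mem_classify (g 1)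
    obtain ⟨p2, q2, e2⟩ := mem_classify (g 2)
    set Pr : ℝ := (p0:ℝ) + p1*ξ + p2*ξ^2 with hPr
    set Qr : ℝ := (q0:ℝ) + q1*ξ + q2*ξ^2 with hQr
    have heq : ((Pr:ℝ):ℂ) + ((Qr:ℝ):ℂ) * θ = 0 := by
      rw [hPr, hQr]
      rw [e0, e1, e2] at hsum
      push_cast
      linear_combination hsum
    have hre : Pr = 0 := by
      have h := congrArg Complex.re heq
      simp [hθ, Complex.add_re, Complex.mul_re, Complex.ofReal_re, Complex.ofReal_im,
        Complex.mul_im, Complex.I_re, Complex.I_im] at h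
      exact h
    have hQr0 : Qr = 0 := by
      have h := congrArg Complex.im heq
      simp [hθ, Complex.add_im, Complex.mul_re, Complex.ofReal_re, Complex.ofReal_im,
        Complex.mul_im, Complex.I_re, Complex.I_im] at h
      exact h
    obtain ⟨hp0, hp1, hp2⟩ := hrat p0 p1 p2 (by rw [← hPr]; exact_mod_cast hre)
    obtain ⟨hq0, hq1, hq2⟩ := hrat q0 q1 q2 (by rw [← hQr]; exact_mod_cast hQr0)
    intro i
    fin_cases i
    · apply Subtype.ext
      show ((g 0 : ℂ)) = ((0 : ℚ⟮θ⟯) : ℂ)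
      rw [e0, hp0, hq0]; simp
    · apply Subtype.ext
      show ((g 1 : ℂ)) = ((0 : ℚ⟮θ⟯) : ℂ)
      rw [e1, hp1, hq1]; simp
    · apply Subtype.ext
      show ((g 2 : ℂ)) = ((0 : ℚ⟮θ⟯) : ℂ)
      rw [e2, hp2, hq2]; simp
  · -- approximation
    intro X hX
    obtain ⟨A, B, C, hA1, hAX, hB, hC⟩ := happrox X hX
    refine ⟨![⟨A, 0⟩, ⟨B, 0⟩, ⟨C, 0⟩], ?_, ?_, ?_⟩
    · intro h0
      have h1 := congrFun h0 0
      simp only [Matrix.cons_val_zero, Pi.zero_apply] at h1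
      have h2 := congrArg Zsqrtd.re h1
      simp at h2
      omega
    · show ‖zsqrtd5ToComplex ⟨A, 0⟩‖ ≤ X
      have he : zsqrtd5ToComplex ⟨A, 0⟩ = ((A:ℝ):ℂ) := by
        simp [zsqrtd5ToComplex]
      have hA0 : (0:ℝ) ≤ (A:ℝ) := by
        have : (1:ℝ) ≤ (A:ℝ) := by exact_mod_cast hA1
        linarith
      rw [he, Complex.norm_real, Real.norm_of_nonneg hA0]
      exact hAX
    · have he0 : zsqrtd5ToComplex ⟨A, 0⟩ = ((A:ℝ):ℂ) := by simp [zsqrtd5ToComplex]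
      have he1 : zsqrtd5ToComplex ⟨B, 0⟩ = ((B:ℝ):ℂ) := by simp [zsqrtd5ToComplex]
      have he2 : zsqrtd5ToComplex ⟨C, 0⟩ = ((C:ℝ):ℂ) := by simp [zsqrtd5ToComplex]
      show max ‖zsqrtd5ToComplex ⟨A,0⟩ * _ - zsqrtd5ToComplex ⟨B,0⟩‖
        ‖zsqrtd5ToComplex ⟨A,0⟩ * _ - zsqrtd5ToComplex ⟨C,0⟩‖ ≤ _
      rw [he0, he1, he2]
      have hx1 : ((A:ℝ):ℂ) * ((ξ:ℝ):ℂ) - ((B:ℝ):ℂ) = (((A:ℝ) * ξ - B : ℝ) : ℂ) := by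
        push_cast; ring
      have hx2 : ((A:ℝ):ℂ) * ((ξ:ℝ):ℂ)^2 - ((C:ℝ):ℂ) = (((A:ℝ) * ξ^2 - C : ℝ) : ℂ) := by
        push_cast; ring
      rw [hx1, hx2, Complex.norm_real, Complex.norm_real, Real.norm_eq_abs, Real.norm_eq_abs]
      have hexp : (-1 : ℝ) / Real.goldenRatio = -(1/Real.goldenRatio) := by ring
      rw [hexp]
      exact max_le hB hC
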